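/- Let f : ℝ → ℝ be n times continuously differentiable on a neighborhood of l with f(l) = l and f'(l) ≠ 1. Then there exist constants C₁, …, C_{n-1} ∈ ℝ such that the map T(x) = f(x) + Σ_{k=1}^{n-1} C_k·(f(x) - x)^k satisfies T(l) = l and T^{(j)}(l) = 0 for all 1 ≤ j ≤ n-1. -/

import Mathlib

open Finset Topology Nat

/-- On an open set, `iteratedDerivWithin` agrees with `iteratedDeriv`. -/
lemma my_iDW_eq {s : Set ℝ} (hs : IsOpen s) {x : ℝ} (hx : x ∈ s) (n : ℕ) (f : ℝ → ℝ) :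
    iteratedDerivWithin n f s x = iteratedDeriv n f x := by
  rw [iteratedDerivWithin_eq_iteratedFDerivWithin, iteratedDeriv_eq_iteratedFDeriv,
    iteratedFDerivWithin_of_isOpen n hs hx]

lemma my_hasDerivAt_iteratedDeriv {s : Set ℝ} (hs : IsOpen s) {f : ℝ → ℝ} {m i : ℕ}
    (hf : ContDiffOn ℝ m f s) (hi : i < m) {x : ℝ} (hx : x ∈ s) :
    HasDerivAt (iteratedDeriv i f) (iteratedDeriv (i + 1) f x) x := by
  have hu : UniqueDiffOn ℝ s := hs.uniqueDiffOn
  have hdo := hf.differentiableOn_iteratedDerivWithin (by exact_mod_cast hi) hu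
  have h1 : DifferentiableAt ℝ (iteratedDerivWithin i f s) x :=
    (hdo x hx).differentiableAt (hs.mem_nhds hx)
  have heq : iteratedDerivWithin i f s =ᶠ[𝓝 x] iteratedDeriv i f :=
    Filter.eventually_of_mem (hs.mem_nhds hx) (fun y hy => my_iDW_eq hs hy i f)
  have h2 : DifferentiableAt ℝ (iteratedDeriv i f) x := by
    exact (Filter.EventuallyEq.differentiableAt_iff heq).mp h1
  have h3 := h2.hasDerivAt
  have h4 : iteratedDeriv (i + 1) f x = deriv (iteratedDeriv i f) x := by
    rw [iteratedDeriv_succ]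
  rw [h4]
  exact h3

/-- Binomial recombination for the inductive step of Leibniz's rule. -/
lemma my_binom_step (m : ℕ) (u v : ℕ → ℝ) :
    ∑ i ∈ range (m + 1), (m.choose i : ℝ) * (u (i + 1) * v (m - i) + u i * v (m + 1 - i))
      = ∑ i ∈ range (m + 2), ((m + 1).choose i : ℝ) * (u i * v (m + 1 - i)) := by
  set A : ℝ := ∑ i ∈ range (m + 1), (m.choose i : ℝ) * (u (i + 1) * v (m - i)) with hA
  set B : ℝ := ∑ i ∈ range (m + 1), (m.choose i : ℝ) * (u i * v (m + 1 - i)) with hB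
  have hL : ∑ i ∈ range (m + 1),
      (m.choose i : ℝ) * (u (i + 1) * v (m - i) + u i * v (m + 1 - i)) = A + B := by
    rw [hA, hB, ← Finset.sum_add_distrib]
    exact Finset.sum_congr rfl fun i _ => by ring
  have hR : ∑ i ∈ range (m + 2), ((m + 1).choose i : ℝ) * (u i * v (m + 1 - i)) = A + B := by
    rw [Finset.sum_range_succ' (fun i => ((m + 1).choose i : ℝ) * (u i * v (m + 1 - i))) (m + 1)]
    have e1 : ∀ i ∈ range (m + 1),
        ((m + 1).choose (i + 1) : ℝ) * (u (i + 1) * v (m + 1 - (i + 1)))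
          = (m.choose i : ℝ) * (u (i + 1) * v (m - i))
            + (m.choose (i + 1) : ℝ) * (u (i + 1) * v (m - i)) := by
      intro i hi
      have h' : m + 1 - (i + 1) = m - i := by omega
      rw [h', Nat.choose_succ_succ]
      push_cast
      ring
    rw [Finset.sum_congr rfl e1, Finset.sum_add_distrib]
    have e2 : ∑ i ∈ range (m + 1), (m.choose (i + 1) : ℝ) * (u (i + 1) * v (m - i))
        + ((m + 1).choose 0 : ℝ) * (u 0 * v (m + 1 - 0)) = B := by
      have h3 := Finset.sum_range_succ' (fun i => (m.choose i : ℝ) * (u i * v (m + 1 - i))) (m + 1)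
      have h4 := Finset.sum_range_succ (fun i => (m.choose i : ℝ) * (u i * v (m + 1 - i))) (m + 1)
      have h5 : ∀ i ∈ range (m + 1),
          (m.choose (i + 1) : ℝ) * (u (i + 1) * v (m + 1 - (i + 1)))
            = (m.choose (i + 1) : ℝ) * (u (i + 1) * v (m - i)) := by
        intro i hi
        have h' : m + 1 - (i + 1) = m - i := by omega
        rw [h']
      rw [Finset.sum_congr rfl h5] at h3
      have h6 : (m.choose (m + 1) : ℝ) = 0 := by
        rw [Nat.choose_eq_zero_of_lt (by omega)]; norm_num
      simp only [Nat.choose_zero_right, Nat.cast_one] at h3 ⊢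
      rw [hB]
      rw [h4] at h3
      rw [h6] at h3
      simp only [zero_mul, add_zero] at h3
      linarith [h3]
    rw [add_assoc, e2, hA]
  rw [hL, hR]

/-- Leibniz rule for iterated derivatives on an open set. -/
lemma my_leibniz {s : Set ℝ} (hs : IsOpen s) :
    ∀ (m : ℕ) (f g : ℝ → ℝ), ContDiffOn ℝ m f s → ContDiffOn ℝ m g s → ∀ x ∈ s,
      iteratedDeriv m (fun y => f y * g y) x
        = ∑ i ∈ range (m + 1),
            (m.choose i : ℝ) * (iteratedDeriv i f x * iteratedDeriv (m - i) g x) := by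
  intro m
  induction m with
  | zero => intro f g _ _ x _; simp
  | succ m IH =>
    intro f g hf hg x hx
    have hf' : ContDiffOn ℝ m f s := hf.of_le (by exact_mod_cast Nat.le_succ m)
    have hg' : ContDiffOn ℝ m g s := hg.of_le (by exact_mod_cast Nat.le_succ m)
    have IH' : ∀ y ∈ s, iteratedDeriv m (fun y => f y * g y) y
        = ∑ i ∈ range (m + 1),
            (m.choose i : ℝ) * (iteratedDeriv i f y * iteratedDeriv (m - i) g y) :=
      fun y hy => IH f g hf' hg' y hy
    rw [iteratedDeriv_succ]
    have heq : iteratedDeriv m (fun y => f y * g y) =ᶠ[𝓝 x]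
        (fun y => ∑ i ∈ range (m + 1),
          (m.choose i : ℝ) * (iteratedDeriv i f y * iteratedDeriv (m - i) g y)) :=
      Filter.eventually_of_mem (hs.mem_nhds hx) (fun y hy => IH' y hy)
    rw [heq.deriv_eq]
    have hterm : ∀ i ∈ range (m + 1),
        HasDerivAt (fun y => (m.choose i : ℝ) *
            (iteratedDeriv i f y * iteratedDeriv (m - i) g y))
          ((m.choose i : ℝ) * (iteratedDeriv (i + 1) f x * iteratedDeriv (m - i) g x
            + iteratedDeriv i f x * iteratedDeriv (m - i + 1) g x)) x := by
      intro i hi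
      have hi' : i < m + 1 := Finset.mem_range.mp hi
      have hdf := my_hasDerivAt_iteratedDeriv hs hf hi' hx
      have hdg := my_hasDerivAt_iteratedDeriv hs hg (show m - i < m + 1 by omega) hx
      exact (hdf.mul hdg).const_mul _
    have hsum := HasDerivAt.fun_sum hterm
    rw [hsum.deriv]
    have hrw : ∀ i ∈ range (m + 1),
        (m.choose i : ℝ) * (iteratedDeriv (i + 1) f x * iteratedDeriv (m - i) g x
          + iteratedDeriv i f x * iteratedDeriv (m - i + 1) g x)
        = (m.choose i : ℝ) * (iteratedDeriv (i + 1) f x * iteratedDeriv (m - i) g x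
          + iteratedDeriv i f x * iteratedDeriv (m + 1 - i) g x) := by
      intro i hi
      have hi' : i < m + 1 := Finset.mem_range.mp hi
      have h' : m - i + 1 = m + 1 - i := by omega
      rw [h']
    rw [Finset.sum_congr rfl hrw]
    exact my_binom_step m (fun i => iteratedDeriv i f x) (fun i => iteratedDeriv i g x)

/-- Vanishing orders of `h ^ k` at a zero of `h`. -/
lemma my_pow_vanish {s : Set ℝ} (hs : IsOpen s) {h : ℝ → ℝ} {n : ℕ}
    (hh : ContDiffOn ℝ n h s) {l : ℝ} (hl : l ∈ s) (h0 : h l = 0) :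
    ∀ k, 1 ≤ k → ∀ j, j ≤ n →
      (j < k → iteratedDeriv j (fun x => h x ^ k) l = 0) ∧
      (j = k → iteratedDeriv j (fun x => h x ^ k) l
        = (Nat.factorial k : ℝ) * (deriv h l) ^ k) := by
  intro k
  induction k with
  | zero => omega
  | succ k IH =>
    intro _ j hj
    rcases Nat.eq_zero_or_pos k with rfl | hk
    · constructor
      · intro hjk
        interval_cases j
        simpa using h0
      · intro hjk; subst hjk
        simp [iteratedDeriv_one]
    · -- k ≥ 1
      have hsplit : (fun x => h x ^ (k + 1)) = fun x => h x * h x ^ k := by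
        funext x; ring
      have hhj : ContDiffOn ℝ j h s := hh.of_le (by exact_mod_cast hj)
      have hhkj : ContDiffOn ℝ j (fun x => h x ^ k) s := hhj.pow k
      have hlei := my_leibniz hs j h (fun x => h x ^ k) hhj hhkj l hl
      rw [hsplit, hlei]
      constructor
      · intro hjk
        refine Finset.sum_eq_zero fun i hi => ?_
        rcases Nat.eq_zero_or_pos i with rfl | hipos
        · simp [h0]
        · have h1 : j - i < k := by
            have := Finset.mem_range.mp hi; omega
          have h2 : j - i ≤ n := by omega
          rw [((IH hk (j - i) h2).1 h1)]
          ring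
      · intro hjk; subst hjk
        rw [Finset.sum_eq_single 1]
        · have hkn : k ≤ n := by omega
          have h'' : k + 1 - 1 = k := by omega
          rw [h'', (IH hk k hkn).2 rfl]
          simp only [iteratedDeriv_one, Nat.choose_one_right]
          rw [Nat.factorial_succ]
          push_cast
          ring
        · intro i hi hine
          rcases Nat.eq_zero_or_pos i with rfl | hipos
          · simp [h0]
          · have h1 : k + 1 - i < k := by
              have := Finset.mem_range.mp hi; omega
            have h2 : k + 1 - i ≤ n := by omega
            rw [(IH hk (k + 1 - i) h2).1 h1]
            ring
        · intro habs
          exfalso; exact habs (Finset.mem_range.mpr (by omega))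

/-- Iterated derivative of a finite sum, on an open set. -/
lemma my_iter_sum {s : Set ℝ} (hs : IsOpen s) {x : ℝ} (hx : x ∈ s) {n : ℕ}
    (F : ℕ → ℝ → ℝ) (t : Finset ℕ) (hF : ∀ k ∈ t, ContDiffOn ℝ n (F k) s) :
    iteratedDeriv n (fun y => ∑ k ∈ t, F k y) x = ∑ k ∈ t, iteratedDeriv n (F k) x := by
  classical
  induction t using Finset.induction with
  | empty =>
    simp only [Finset.sum_empty]
    rw [← my_iDW_eq hs hx, iteratedDerivWithin_eq_iteratedFDerivWithin,
      iteratedFDerivWithin_zero_fun]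
    simp
  | @insert a t ha IHt =>
    simp only [Finset.sum_insert ha]
    have hFa := hF a (Finset.mem_insert_self a t)
    have hFt : ∀ k ∈ t, ContDiffOn ℝ n (F k) s := fun k hk =>
      hF k (Finset.mem_insert_of_mem hk)
    have hsum : ContDiffOn ℝ n (fun y => ∑ k ∈ t, F k y) s :=
      ContDiffOn.sum fun k hk => hFt k hk
    have hadd := iteratedDerivWithin_add hx hs.uniqueDiffOn (hFa x hx) (hsum x hx)
    rw [← my_iDW_eq hs hx]
    rw [show (fun y => F a y + ∑ k ∈ t, F k y)
        = (F a + fun y => ∑ k ∈ t, F k y) from rfl]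
    rw [hadd, my_iDW_eq hs hx, my_iDW_eq hs hx, IHt hFt]

/-- Iterated derivative of a constant multiple, on an open set. -/
lemma my_iter_const_mul {s : Set ℝ} (hs : IsOpen s) {x : ℝ} (hx : x ∈ s) {n : ℕ}
    (c : ℝ) {F : ℝ → ℝ} (hF : ContDiffOn ℝ n F s) :
    iteratedDeriv n (fun y => c * F y) x = c * iteratedDeriv n F x := by
  rw [← my_iDW_eq hs hx, ← my_iDW_eq hs hx (f := F),
    iteratedDerivWithin_const_mul hx hs.uniqueDiffOn c (hF x hx)]

/-- The recursively defined correction coefficients. -/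
noncomputable def coefAux (f : ℝ → ℝ) (l : ℝ) : ℕ → ℝ
  | 0 => 0
  | (m + 1) =>
      -(iteratedDeriv (m + 1)
          (fun x => f x + ∑ k ∈ (Finset.Icc 1 m).attach,
              coefAux f l k.1 * (f x - x) ^ k.1) l) /
        ((Nat.factorial (m + 1) : ℝ) * (deriv f l - 1) ^ (m + 1))
  decreasing_by
    have := (Finset.mem_Icc.mp k.2).2; omega

lemma coefAux_succ (f : ℝ → ℝ) (l : ℝ) (m : ℕ) :
    coefAux f l (m + 1) =
      -(iteratedDeriv (m + 1)
          (fun x => f x + ∑ k ∈ Finset.Icc 1 m, coefAux f l k * (f x - x) ^ k) l) /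
        ((Nat.factorial (m + 1) : ℝ) * (deriv f l - 1) ^ (m + 1)) := by
  have hfun : (fun x => f x + ∑ k ∈ (Finset.Icc 1 m).attach,
      coefAux f l k.1 * (f x - x) ^ k.1)
      = (fun x => f x + ∑ k ∈ Finset.Icc 1 m, coefAux f l k * (f x - x) ^ k) := by
    funext x
    rw [Finset.sum_attach (Finset.Icc 1 m) (fun k => coefAux f l k * (f x - x) ^ k)]
  rw [coefAux, hfun]

theorem stmt_16 (n : ℕ) (hn : 2 ≤ n) (f : ℝ → ℝ) (l : ℝ)
    (hf : ContDiffAt ℝ n f l) (hfl : f l = l) (hf' : deriv f l ≠ 1) :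
    ∃ C : ℕ → ℝ,
      (fun x => f x + ∑ k ∈ Finset.Icc 1 (n - 1), C k * (f x - x) ^ k) l = l ∧
      ∀ j, 1 ≤ j → j ≤ n - 1 →
        iteratedDeriv j
          (fun x => f x + ∑ k ∈ Finset.Icc 1 (n - 1), C k * (f x - x) ^ k) l = 0 := by
  classical
  obtain ⟨u, hu_nhds, hfu⟩ := hf.contDiffOn (le_refl _) (by simp)
  have hs : IsOpen (interior u) := isOpen_interior
  have hls : l ∈ interior u := mem_interior_iff_mem_nhds.mpr hu_nhds
  have hfs : ContDiffOn ℝ n f (interior u) := hfu.mono interior_subset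
  have hhs : ContDiffOn ℝ n (fun x => f x - x) (interior u) := hfs.sub contDiffOn_id
  have hh0 : (fun x => f x - x) l = 0 := by simp [hfl]
  have hfd : DifferentiableAt ℝ f l :=
    hf.differentiableAt (by exact_mod_cast (show n ≠ 0 by omega))
  have hdh : deriv (fun x => f x - x) l = deriv f l - 1 := by
    rw [deriv_fun_sub hfd differentiableAt_fun_id]
    simp
  have ha : deriv (fun x => f x - x) l ≠ 0 := by
    rw [hdh]; exact sub_ne_zero.mpr hf'
  -- smoothness of pieces
  have hpiece : ∀ k : ℕ, ContDiffOn ℝ n (fun x => coefAux f l k * (f x - x) ^ k) (interior u) :=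
    fun k => ContDiffOn.mul contDiffOn_const (hhs.pow k)
  -- additivity expansion
  have hexpand : ∀ (m j : ℕ), j ≤ n →
      iteratedDeriv j (fun x => f x + ∑ k ∈ Finset.Icc 1 m, coefAux f l k * (f x - x) ^ k) l
        = iteratedDeriv j f l
          + ∑ k ∈ Finset.Icc 1 m, coefAux f l k * iteratedDeriv j (fun x => (f x - x) ^ k) l := by
    intro m j hj
    have hfj : ContDiffOn ℝ j f (interior u) := hfs.of_le (by exact_mod_cast hj)
    have hsumj : ContDiffOn ℝ j
        (fun x => ∑ k ∈ Finset.Icc 1 m, coefAux f l k * (f x - x) ^ k) (interior u) :=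
      ContDiffOn.sum fun k _ => (hpiece k).of_le (by exact_mod_cast hj)
    have h1 : iteratedDeriv j
        (fun x => f x + ∑ k ∈ Finset.Icc 1 m, coefAux f l k * (f x - x) ^ k) l
        = iteratedDeriv j f l
          + iteratedDeriv j (fun x => ∑ k ∈ Finset.Icc 1 m, coefAux f l k * (f x - x) ^ k) l := by
      rw [← my_iDW_eq hs hls, ← my_iDW_eq hs hls (f := f),
        ← my_iDW_eq hs hls (f := fun x => ∑ k ∈ Finset.Icc 1 m, coefAux f l k * (f x - x) ^ k)]
      exact iteratedDerivWithin_add hls hs.uniqueDiffOn (hfj l hls) (hsumj l hls)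
    rw [h1]
    congr 1
    rw [my_iter_sum hs hls (fun k x => coefAux f l k * (f x - x) ^ k) (Finset.Icc 1 m)
      (fun k _ => (hpiece k).of_le (by exact_mod_cast hj))]
    exact Finset.sum_congr rfl fun k _ =>
      my_iter_const_mul hs hls (coefAux f l k) ((hhs.pow k).of_le (by exact_mod_cast hj))
  -- vanishing of powers
  have hpow := my_pow_vanish hs hhs hls hh0
  -- main induction
  have main : ∀ m, m ≤ n - 1 → ∀ j, 1 ≤ j → j ≤ m →
      iteratedDeriv j
        (fun x => f x + ∑ k ∈ Finset.Icc 1 m, coefAux f l k * (f x - x) ^ k) l = 0 := by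
    intro m
    induction m with
    | zero => intro _ j hj1 hj0; omega
    | succ m IHm =>
      intro hmn j hj1 hjm
      have hmn' : m ≤ n - 1 := by omega
      have hjn : j ≤ n := by omega
      have hstep : iteratedDeriv j
          (fun x => f x + ∑ k ∈ Finset.Icc 1 (m + 1), coefAux f l k * (f x - x) ^ k) l
          = iteratedDeriv j
              (fun x => f x + ∑ k ∈ Finset.Icc 1 m, coefAux f l k * (f x - x) ^ k) l
            + coefAux f l (m + 1) * iteratedDeriv j (fun x => (f x - x) ^ (m + 1)) l := by
        rw [hexpand (m + 1) j hjn, hexpand m j hjn,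
          Finset.sum_Icc_succ_top (show 1 ≤ m + 1 by omega)]
        ring
      rcases Nat.lt_or_ge j (m + 1) with hjlt | hjge
      · rw [hstep, IHm hmn' j hj1 (by omega), (hpow (m + 1) (by omega) j hjn).1 hjlt]
        ring
      · have hjeq : j = m + 1 := by omega
        subst hjeq
        rw [hstep, (hpow (m + 1) (by omega) (m + 1) hjn).2 rfl]
        rw [coefAux_succ, hdh]
        have hd0 : ((Nat.factorial (m + 1) : ℝ) * (deriv f l - 1) ^ (m + 1)) ≠ 0 :=
          mul_ne_zero (by exact_mod_cast Nat.factorial_ne_zero (m + 1))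
            (pow_ne_zero _ (sub_ne_zero.mpr hf'))
        field_simp
        ring
  refine ⟨coefAux f l, ?_, ?_⟩
  · show f l + ∑ k ∈ Finset.Icc 1 (n - 1), coefAux f l k * (f l - l) ^ k = l
    have hz : ∀ k ∈ Finset.Icc 1 (n - 1), coefAux f l k * (f l - l) ^ k = 0 := by
      intro k hk
      have hk1 : 1 ≤ k := (Finset.mem_Icc.mp hk).1
      rw [hfl, sub_self, zero_pow (by omega)]
      ring
    rw [Finset.sum_congr rfl hz]
    simp [hfl]
  · intro j hj1 hj2
    exact main (n - 1) (le_refl _) j hj1 hj2
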